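/- Suppose two valued trees T1 (with layering ℓ1) and T2 (with layering ℓ2) have equal signatures. Then for any node x of T1, there exists a node y of T2 such that dist(x, root of T1) = dist(y, root of T2) and the signatures of the subtrees rooted at x and y are equal. -/

import Mathlib

/-- A valued tree with leaf layers in `{0, …, k}` and internal `σ`-values in
`{0, …, s} ∪ {∞}` (encoded as `Option (Fin (s+1))`, with `none` standing for `∞`). -/
inductive VTree (k s : ℕ) : Type where
  | leaf : Fin (k + 1) → VTree k s
  | node : List (VTree k s) → Option (Fin (s + 1)) → VTree k s

/-- `SigEqAux k s n t₁ t₂` means that `t₁` and `t₂` have equal signatures, compared to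
recursion depth (fuel) `n`.  Two leaves have equal signatures iff their layers agree; two
internal nodes have equal signatures iff their `σ`-values agree and, for every possible
child-subtree signature, the two roots have the same number of children with that
signature, truncated at 2. -/
def SigEqAux (k s : ℕ) : ℕ → VTree k s → VTree k s → Prop
  | 0, _, _ => True
  | _ + 1, .leaf a, .leaf b => a = b
  | n + 1, .node c1 s1, .node c2 s2 =>
      s1 = s2 ∧
      ∀ u ∈ c1 ++ c2,
        min 2 (Nat.card {i : Fin c1.length // SigEqAux k s n (c1.get i) u}) =
        min 2 (Nat.card {i : Fin c2.length // SigEqAux k s n (c2.get i) u})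
  | _ + 1, .leaf _, .node _ _ => False
  | _ + 1, .node _ _, .leaf _ => False

/-- `SubAt k s d x t` means that `x` is a subtree of `t` rooted at a node at depth `d`. -/
inductive SubAt (k s : ℕ) : ℕ → VTree k s → VTree k s → Prop where
  | refl (t : VTree k s) : SubAt k s 0 t t
  | step {d : ℕ} {x u : VTree k s} {c : List (VTree k s)} {σ : Option (Fin (s + 1))} :
      u ∈ c → SubAt k s d x u → SubAt k s (d + 1) x (.node c σ)

lemma SigEqAux.rfl (k s n : ℕ) (t : VTree k s) : SigEqAux k s n t t := by
  cases n with
  | zero => trivial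
  | succ n =>
    cases t with
    | leaf a => exact Eq.refl a
    | node c σ => exact ⟨Eq.refl σ, fun u _ => Eq.refl _⟩

lemma SigEqAux.symm {k s n : ℕ} {a b : VTree k s} (h : SigEqAux k s n a b) :
    SigEqAux k s n b a := by
  cases n with
  | zero => trivial
  | succ n =>
    cases a with
    | leaf a =>
      cases b with
      | leaf b => exact Eq.symm h
      | node c σ => exact h
    | node c1 s1 =>
      cases b with
      | leaf b => exact h
      | node c2 s2 =>
        obtain ⟨h1, h2⟩ := h
        refine ⟨h1.symm, fun u hu => ?_⟩
        have : u ∈ c1 ++ c2 := by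
          simp only [List.mem_append] at hu ⊢; tauto
        exact (h2 u this).symm

theorem stmt14 (k s n d : ℕ) (T1 T2 x : VTree k s)
    (hsig : SigEqAux k s (n + d) T1 T2)
    (hx : SubAt k s d x T1) :
    ∃ y : VTree k s, SubAt k s d y T2 ∧ SigEqAux k s n x y := by
  induction hx generalizing T2 with
  | refl t => exact ⟨T2, SubAt.refl T2, hsig⟩
  | @step d x u c σ hu hsub ih =>
    have hsig' : SigEqAux k s ((n + d) + 1) (.node c σ) T2 := hsig
    cases T2 with
    | leaf b => exact absurd hsig' (by simp [SigEqAux])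
    | node c2 s2 =>
      obtain ⟨h1, h2⟩ := hsig'
      have hmem : u ∈ c ++ c2 := List.mem_append_left _ hu
      have hcard := h2 u hmem
      -- left side nonempty
      obtain ⟨i, hiu⟩ := List.mem_iff_get.mp hu
      have hL : 0 < Nat.card {j : Fin c.length // SigEqAux k s (n + d) (c.get j) u} := by
        rw [Nat.card_pos_iff]
        exact ⟨⟨⟨i, hiu ▸ SigEqAux.rfl k s (n + d) u⟩⟩, Subtype.finite⟩
      have hR : 0 < Nat.card {j : Fin c2.length // SigEqAux k s (n + d) (c2.get j) u} := by
        omega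
      rw [Nat.card_pos_iff] at hR
      obtain ⟨⟨j, hj⟩⟩ := hR.1
      have := ih (c2.get j) hj.symm
      obtain ⟨y, hy1, hy2⟩ := this
      exact ⟨y, SubAt.step (List.get_mem c2 j) hy1, hy2⟩
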